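/- For every finite simple graph G and every set X ⊆ V(G), the following are equivalent: (1) X is a clique transversal of G; (2) for every clique C of the induced subgraph G − X (i.e., every clique of G disjoint from X), there exists a vertex x ∈ X such that C ⊆ N_G(x); (3) for every clique C of G − X with |C| ≤ |X|, there exists a vertex x ∈ X such that C ⊆ N_G(x). -/

import Mathlib

open Finset
open scoped Classical

variable {V : Type*} [Fintype V] [DecidableEq V]

/-- A hypergraph on vertex set `V` is given by its finite set of hyperedges `E`;
the condition that every vertex belongs to at least one hyperedge. -/
def Covers (E : Finset (Finset V)) : Prop := ∀ v : V, ∃ e ∈ E, v ∈ e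

/-- A hypergraph is Sperner if no hyperedge is contained in another hyperedge. -/
def SpernerHG (E : Finset (Finset V)) : Prop := ∀ e ∈ E, ∀ f ∈ E, e ⊆ f → e = f

/-- A transversal of a hypergraph: a set of vertices intersecting all hyperedges. -/
def IsTransversal (E : Finset (Finset V)) (T : Finset V) : Prop := ∀ e ∈ E, (e ∩ T).Nonempty

/-- A minimal transversal: a transversal not properly containing another transversal. -/
def IsMinTransversal (E : Finset (Finset V)) (T : Finset V) : Prop :=
  IsTransversal E T ∧ ∀ T' ⊆ T, IsTransversal E T' → T' = T

/-- The dual hypergraph: its hyperedges are exactly the minimal transversals. -/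
noncomputable def dualHG (E : Finset (Finset V)) : Finset (Finset V) :=
  Finset.univ.filter fun T => IsMinTransversal E T

/-- The co-occurrence graph of a hypergraph: two distinct vertices are adjacent
iff some hyperedge contains both. -/
def coocGraph (E : Finset (Finset V)) : SimpleGraph V where
  Adj u v := u ≠ v ∧ ∃ e ∈ E, u ∈ e ∧ v ∈ e
  symm := by
    refine ⟨?_⟩
    rintro u v ⟨huv, e, he, hu, hv⟩
    exact ⟨Ne.symm huv, e, he, hv, hu⟩
  loopless := by
    refine ⟨?_⟩
    rintro v ⟨hv, -⟩
    exact hv rfl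

/-- A maximal clique of a graph: a clique not properly contained in any other clique. -/
def IsMaxClique (G : SimpleGraph V) (C : Finset V) : Prop :=
  G.IsClique (C : Set V) ∧ ∀ D : Finset V, G.IsClique (D : Set V) → C ⊆ D → D = C

/-- A hypergraph is conformal if every maximal clique of its co-occurrence graph
is a hyperedge. -/
def ConformalHG (E : Finset (Finset V)) : Prop :=
  ∀ C : Finset V, IsMaxClique (coocGraph E) C → C ∈ E

/-- A hypergraph is dually conformal if its dual hypergraph is conformal. -/
def DuallyConformalHG (E : Finset (Finset V)) : Prop :=
  ConformalHG (dualHG E)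

/-- A clique transversal of a graph: a set of vertices meeting all maximal cliques. -/
def IsCliqueTransversal (G : SimpleGraph V) (X : Finset V) : Prop :=
  ∀ C : Finset V, IsMaxClique G C → (C ∩ X).Nonempty

/-- A minimal clique transversal: a clique transversal not properly containing
another clique transversal. -/
def IsMinCliqueTransversal (G : SimpleGraph V) (X : Finset V) : Prop :=
  IsCliqueTransversal G X ∧ ∀ Y ⊆ X, IsCliqueTransversal G Y → Y = X

/-- The upper clique transversal number: the maximum size of a minimal clique
transversal. -/
noncomputable def uct (G : SimpleGraph V) : ℕ :=
  (Finset.univ.filter fun X : Finset V => IsMinCliqueTransversal G X).sup Finset.card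

/-- TFAE: (1) `X` is a clique transversal of `G`;
(2) every clique of `G` disjoint from `X` is contained in the neighborhood of some
vertex of `X`; (3) the same restricted to cliques of size at most `|X|`. -/
theorem clique_transversal_tfae (G : SimpleGraph V) (X : Finset V) :
    List.TFAE [IsCliqueTransversal G X,
      ∀ C : Finset V, G.IsClique (C : Set V) → Disjoint C X →
        ∃ x ∈ X, ∀ v ∈ C, G.Adj x v,
      ∀ C : Finset V, G.IsClique (C : Set V) → Disjoint C X → C.card ≤ X.card →
        ∃ x ∈ X, ∀ v ∈ C, G.Adj x v] := by

  tfae_have 1 → 2 := by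
    intro h1 C hC hdisj
    -- extend C to a maximal clique
    classical
    obtain ⟨D, hDmem, hDmax⟩ := Finset.exists_max_image
      (Finset.univ.filter fun D : Finset V => G.IsClique (D : Set V) ∧ C ⊆ D)
      Finset.card ⟨C, by simp [hC]⟩
    simp only [Finset.mem_filter, Finset.mem_univ, true_and] at hDmem
    have hDmaxclique : IsMaxClique G D := by
      refine ⟨hDmem.1, fun D' hD' hsub => ?_⟩
      have hle : D'.card ≤ D.card := by
        have := hDmax D' (by simp [hD', hDmem.2.trans hsub])
        exact this
      exact (Finset.eq_of_subset_of_card_le hsub hle).symm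
    obtain ⟨x, hx⟩ := h1 D hDmaxclique
    rw [Finset.mem_inter] at hx
    refine ⟨x, hx.2, fun v hv => ?_⟩
    have hxC : x ∉ C := fun hxc => (Finset.disjoint_left.mp hdisj hxc) hx.2
    exact hDmem.1 hx.1 (hDmem.2 hv) (fun h => hxC (h ▸ hv))
  tfae_have 2 → 3 := fun h2 C hC hd _ => h2 C hC hd
  tfae_have 3 → 2 := by
    intro h3 C hC hdisj
    by_contra hcon
    push_neg at hcon
    choose g hgC hgadj using hcon
    set C' : Finset V := X.attach.image (fun x => g x.1 x.2) with hC'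
    have hC'sub : C' ⊆ C := by
      intro v hv
      simp only [hC', Finset.mem_image, Finset.mem_attach, true_and] at hv
      obtain ⟨x, hx⟩ := hv
      exact hx ▸ hgC x.1 x.2
    have hcard : C'.card ≤ X.card := by
      calc C'.card ≤ X.attach.card := Finset.card_image_le
        _ = X.card := Finset.card_attach
    obtain ⟨x, hxX, hxadj⟩ := h3 C' (hC.subset (by exact_mod_cast hC'sub))
      (Finset.disjoint_of_subset_left hC'sub hdisj) hcard
    exact hgadj x hxX (hxadj _ (Finset.mem_image_of_mem _ (Finset.mem_attach X ⟨x, hxX⟩)))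
  tfae_have 2 → 1 := by
    intro h2 C hCmax
    by_contra hempty
    rw [Finset.not_nonempty_iff_eq_empty, ← Finset.disjoint_iff_inter_eq_empty] at hempty
    obtain ⟨x, hxX, hxadj⟩ := h2 C hCmax.1 hempty
    have hxC : x ∉ C := fun hxc => (Finset.disjoint_left.mp hempty hxc) hxX
    have : insert x C = C := by
      refine hCmax.2 _ ?_ (Finset.subset_insert x C)
      rw [Finset.coe_insert]
      exact hCmax.1.insert (fun v hv _ => hxadj v hv)
    exact hxC (this ▸ Finset.mem_insert_self x C)
  tfae_finish
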